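/- arXiv:0902.2693 — 3 statements merged into one kernel-verified Lean document; each statement's English description precedes it below -/
import Mathlib

section
/- Let A be a positive semidefinite symmetric d×d real matrix and let μ be a probability measure on a measurable space Γ, and let σ : Γ → ℝ^{d×d}, w : Γ → ℝ^d be bounded measurable maps such that ∫_Γ σ(γ)σ(γ)^* dμ(γ) = A. Then the vector ∫_Γ σ(γ)σ(γ)^* w(γ) dμ(γ) lies in the range of A; in particular there exists w̄ ∈ ℝ^d with A w̄ = ∫_Γ σ(γ)σ(γ)^* w(γ) dμ(γ). -/
open MeasureTheory Matrix

lemma range_of_symm {d : ℕ} (A : Matrix (Fin d) (Fin d) ℝ) (hA : A.IsHermitian)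
    (v : Fin d → ℝ) (h : ∀ x : Fin d → ℝ, A *ᵥ x = 0 → x ⬝ᵥ v = 0) :
    ∃ wbar, A *ᵥ wbar = v := by
  set T := Matrix.toEuclideanLin A with hTdef
  have hT : T.IsSymmetric := (Matrix.isHermitian_iff_isSymmetric).mp hA
  set S : Submodule ℝ (EuclideanSpace ℝ (Fin d)) := LinearMap.range T with hS
  have hv : (WithLp.equiv 2 (Fin d → ℝ)).symm v ∈ Sᗮᗮ := by
    rw [Submodule.mem_orthogonal]
    intro y hy
    have hy' : ∀ u ∈ S, inner ℝ u y = (0 : ℝ) := (Submodule.mem_orthogonal S y).mp hy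
    have hTy : T y = 0 := by
      have h1 : ∀ x, inner ℝ (T y) x = (0 : ℝ) := by
        intro x
        have := hy' (T x) ⟨x, rfl⟩
        rw [hT x y] at this
        rwa [real_inner_comm] at this
      exact inner_self_eq_zero.mp (h1 (T y))
    have hAy : A *ᵥ (WithLp.equiv 2 (Fin d → ℝ) y) = 0 := by
      have := congrArg (WithLp.equiv 2 (Fin d → ℝ)) hTy
      exact this
    have := h _ hAy
    rw [EuclideanSpace.inner_eq_star_dotProduct]
    simpa [dotProduct_comm] using this
  rw [Submodule.orthogonal_orthogonal] at hv
  obtain ⟨u, hu⟩ := hv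
  refine ⟨WithLp.equiv 2 (Fin d → ℝ) u, ?_⟩
  have := congrArg (WithLp.equiv 2 (Fin d → ℝ)) hu
  change A *ᵥ (WithLp.equiv 2 (Fin d → ℝ) u) = v at this
  simpa using this

theorem stmt3 {d : ℕ} (hd : 1 ≤ d) {Γ : Type*} [MeasurableSpace Γ]
    (μ : Measure Γ) [IsProbabilityMeasure μ]
    (A : Matrix (Fin d) (Fin d) ℝ) (hA : A.PosSemidef)
    (σ : Γ → Matrix (Fin d) (Fin d) ℝ) (w : Γ → Fin d → ℝ)
    (hσm : ∀ i j, Measurable fun γ => σ γ i j)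
    (hwm : ∀ i, Measurable fun γ => w γ i)
    (hσb : ∃ C, ∀ γ i j, |σ γ i j| ≤ C)
    (hwb : ∃ C, ∀ γ i, |w γ i| ≤ C)
    (hmom : ∀ i j, (∫ γ, (σ γ * (σ γ)ᵀ) i j ∂μ) = A i j) :
    ∃ wbar : Fin d → ℝ, A *ᵥ wbar = fun i => ∫ γ, ((σ γ * (σ γ)ᵀ) *ᵥ w γ) i ∂μ := by
  obtain ⟨C, hC⟩ := hσb
  obtain ⟨Cw, hCw⟩ := hwb
  set C' : ℝ := max C 0 with hC'def
  set Cw' : ℝ := max Cw 0 with hCw'def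
  have hC' : ∀ γ i j, |σ γ i j| ≤ C' := fun γ i j => (hC γ i j).trans (le_max_left _ _)
  have hCw' : ∀ γ i, |w γ i| ≤ Cw' := fun γ i => (hCw γ i).trans (le_max_left _ _)
  -- measurability and integrability of entries of σσᵀ
  have hfm : ∀ i j, Measurable fun γ => (σ γ * (σ γ)ᵀ) i j := by
    intro i j
    simp only [Matrix.mul_apply, Matrix.transpose_apply]
    exact Finset.measurable_sum _ fun k _ => (hσm i k).mul (hσm j k)
  have hfb : ∀ γ i j, |(σ γ * (σ γ)ᵀ) i j| ≤ d * C' ^ 2 := by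
    intro γ i j
    simp only [Matrix.mul_apply, Matrix.transpose_apply]
    calc |∑ k, σ γ i k * σ γ j k| ≤ ∑ k, |σ γ i k * σ γ j k| := Finset.abs_sum_le_sum_abs _ _
      _ ≤ ∑ _k : Fin d, C' ^ 2 := by
          refine Finset.sum_le_sum fun k _ => ?_
          rw [abs_mul, sq]
          exact mul_le_mul (hC' γ i k) (hC' γ j k) (abs_nonneg _) (le_max_right C 0)
      _ = d * C' ^ 2 := by simp [mul_comm]
  have hfi : ∀ i j, Integrable (fun γ => (σ γ * (σ γ)ᵀ) i j) μ := by
    intro i j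
    refine Integrable.mono' (integrable_const (d * C' ^ 2)) (hfm i j).aestronglyMeasurable
      (ae_of_all _ fun γ => ?_)
    simpa [Real.norm_eq_abs] using hfb γ i j
  -- integrability of entries of σσᵀw
  have hgm : ∀ i, Measurable fun γ => ((σ γ * (σ γ)ᵀ) *ᵥ w γ) i := by
    intro i
    simp only [Matrix.mulVec, dotProduct]
    exact Finset.measurable_sum _ fun j _ => (hfm i j).mul (hwm j)
  have hgi : ∀ i, Integrable (fun γ => ((σ γ * (σ γ)ᵀ) *ᵥ w γ) i) μ := by
    intro i
    refine Integrable.mono' (integrable_const (d * (d * C' ^ 2 * Cw'))) (hgm i).aestronglyMeasurable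
      (ae_of_all _ fun γ => ?_)
    simp only [Real.norm_eq_abs, Matrix.mulVec, dotProduct]
    calc |∑ j, (σ γ * (σ γ)ᵀ) i j * w γ j| ≤ ∑ j, |(σ γ * (σ γ)ᵀ) i j * w γ j| :=
          Finset.abs_sum_le_sum_abs _ _
      _ ≤ ∑ _j : Fin d, d * C' ^ 2 * Cw' := by
          refine Finset.sum_le_sum fun j _ => ?_
          rw [abs_mul]
          exact mul_le_mul (hfb γ i j) (hCw' γ j) (abs_nonneg _)
            (by positivity)
      _ = d * (d * C' ^ 2 * Cw') := by simp [mul_comm]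
  set v : Fin d → ℝ := fun i => ∫ γ, ((σ γ * (σ γ)ᵀ) *ᵥ w γ) i ∂μ with hvdef
  refine range_of_symm A hA.1 v ?_
  intro x hx
  -- Step 1: ∫ x ⬝ᵥ (σσᵀ x) = x ⬝ᵥ A x = 0
  have key1 : (∫ γ, x ⬝ᵥ ((σ γ * (σ γ)ᵀ) *ᵥ x) ∂μ) = 0 := by
    have e1 : ∀ γ, x ⬝ᵥ ((σ γ * (σ γ)ᵀ) *ᵥ x) = ∑ i, ∑ j, x i * ((σ γ * (σ γ)ᵀ) i j * x j) := by
      intro γ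
      simp [dotProduct, Matrix.mulVec, Finset.mul_sum]
    calc (∫ γ, x ⬝ᵥ ((σ γ * (σ γ)ᵀ) *ᵥ x) ∂μ)
        = ∫ γ, ∑ i, ∑ j, x i * ((σ γ * (σ γ)ᵀ) i j * x j) ∂μ := by
          exact integral_congr_ae (ae_of_all _ e1)
      _ = ∑ i, ∑ j, ∫ γ, x i * ((σ γ * (σ γ)ᵀ) i j * x j) ∂μ := by
          rw [integral_finset_sum]
          · exact Finset.sum_congr rfl fun i _ => integral_finset_sum _
              fun j _ => (((hfi i j).mul_const (x j)).const_mul (x i))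
          · exact fun i _ => integrable_finset_sum _
              fun j _ => (((hfi i j).mul_const (x j)).const_mul (x i))
      _ = ∑ i, ∑ j, x i * (A i j * x j) := by
          refine Finset.sum_congr rfl fun i _ => Finset.sum_congr rfl fun j _ => ?_
          rw [integral_const_mul, integral_mul_const, hmom]
      _ = x ⬝ᵥ (A *ᵥ x) := by simp [dotProduct, Matrix.mulVec, Finset.mul_sum]
      _ = 0 := by rw [hx]; simp
  -- pointwise: x ⬝ᵥ (σσᵀ x) = ∑ k ((σᵀ x) k)^2
  have e2 : ∀ γ, x ⬝ᵥ ((σ γ * (σ γ)ᵀ) *ᵥ x) = ∑ k, (((σ γ)ᵀ *ᵥ x) k) ^ 2 := by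
    intro γ
    rw [← Matrix.mulVec_mulVec, Matrix.dotProduct_mulVec, ← Matrix.mulVec_transpose]
    simp [dotProduct, sq]
  have hq_nonneg : ∀ γ, 0 ≤ x ⬝ᵥ ((σ γ * (σ γ)ᵀ) *ᵥ x) := by
    intro γ
    rw [e2]
    exact Finset.sum_nonneg fun k _ => sq_nonneg _
  have hq_int : Integrable (fun γ => x ⬝ᵥ ((σ γ * (σ γ)ᵀ) *ᵥ x)) μ := by
    have : (fun γ => x ⬝ᵥ ((σ γ * (σ γ)ᵀ) *ᵥ x)) =
        fun γ => ∑ i, ∑ j, x i * ((σ γ * (σ γ)ᵀ) i j * x j) := by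
      funext γ; simp [dotProduct, Matrix.mulVec, Finset.mul_sum]
    rw [this]
    exact integrable_finset_sum _ fun i _ => integrable_finset_sum _
      fun j _ => (((hfi i j).mul_const (x j)).const_mul (x i))
  have hae : ∀ᵐ γ ∂μ, x ⬝ᵥ ((σ γ * (σ γ)ᵀ) *ᵥ x) = 0 :=
    (integral_eq_zero_iff_of_nonneg hq_nonneg hq_int).mp key1
  -- a.e., σᵀ x = 0, hence x ⬝ᵥ (σσᵀ w) = 0
  have hae2 : ∀ᵐ γ ∂μ, x ⬝ᵥ ((σ γ * (σ γ)ᵀ) *ᵥ w γ) = 0 := by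
    filter_upwards [hae] with γ hγ
    rw [e2] at hγ
    have hzero : ((σ γ)ᵀ *ᵥ x) = 0 := by
      funext k
      have := (Finset.sum_eq_zero_iff_of_nonneg (fun k _ => sq_nonneg _)).mp hγ k (Finset.mem_univ k)
      exact pow_eq_zero_iff (by norm_num) |>.mp this
    rw [← Matrix.mulVec_mulVec, Matrix.dotProduct_mulVec, ← Matrix.mulVec_transpose, hzero]
    simp
  -- conclude
  have hxv : x ⬝ᵥ v = ∫ γ, x ⬝ᵥ ((σ γ * (σ γ)ᵀ) *ᵥ w γ) ∂μ := by
    have e3 : ∀ γ, x ⬝ᵥ ((σ γ * (σ γ)ᵀ) *ᵥ w γ) = ∑ i, x i * ((σ γ * (σ γ)ᵀ) *ᵥ w γ) i := by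
      intro γ; simp [dotProduct]
    calc x ⬝ᵥ v = ∑ i, x i * ∫ γ, ((σ γ * (σ γ)ᵀ) *ᵥ w γ) i ∂μ := by
          simp [hvdef, dotProduct]
      _ = ∑ i, ∫ γ, x i * ((σ γ * (σ γ)ᵀ) *ᵥ w γ) i ∂μ := by
          simp [integral_const_mul]
      _ = ∫ γ, ∑ i, x i * ((σ γ * (σ γ)ᵀ) *ᵥ w γ) i ∂μ :=
          (integral_finset_sum _ fun i _ => (hgi i).const_mul (x i)).symm
      _ = ∫ γ, x ⬝ᵥ ((σ γ * (σ γ)ᵀ) *ᵥ w γ) ∂μ := integral_congr_ae (ae_of_all _ fun γ => (e3 γ).symm)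
  rw [hxv]
  exact integral_eq_zero_of_ae hae2
end

section
/- Suppose for each (x,y) the set S(x,y) = {((σσ^*)(x,v), (σσ^*)(x,v)w, b(x,v), f(x,y,σ^*(x,v)w,v)) : v ∈ U, w ∈ ℝ^d, |σ^*(x,v)w| ≤ K} is convex (assumption (H1)). Then assumption (H) holds: for every (x,y) there exists a compact set A ⊆ ℝ^d × ℝ^d × U containing {(σ^*(x,v)w, 0, v) : v ∈ U, w ∈ ℝ^d, |σ^*(x,v)w| ≤ K} such that the set {((ΣΣ^*)(x,y,z,θ,v), β(x,y,z,θ,v)) : (z,θ,v) ∈ A} is convex. -/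
open Matrix

/-- Euclidean norm of a vector in `Fin d → ℝ`. -/
noncomputable def enorm' {d : ℕ} (z : Fin d → ℝ) : ℝ := Real.sqrt (∑ i, z i ^ 2)

/-- The matrix `Σ(x,y,z,θ,v) = [[σ(x,v), 0],[z^*, θ^*]]`. -/
def SigmaMat {d : ℕ} (σxv : Matrix (Fin d) (Fin d) ℝ) (z θ : Fin d → ℝ) :
    Matrix (Fin d ⊕ Unit) (Fin d ⊕ Fin d) ℝ :=
  Matrix.fromBlocks σxv (0 : Matrix (Fin d) (Fin d) ℝ) (Matrix.replicateRow Unit z) (Matrix.replicateRow Unit θ)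

section aux
variable {d : ℕ}

lemma dot_self_nonneg' (z : Fin d → ℝ) : 0 ≤ z ⬝ᵥ z :=
  Finset.sum_nonneg fun _ _ => mul_self_nonneg _

lemma enorm_nonneg' (z : Fin d → ℝ) : 0 ≤ enorm' z := Real.sqrt_nonneg _

lemma enorm_sq_eq (z : Fin d → ℝ) : enorm' z ^ 2 = z ⬝ᵥ z := by
  rw [enorm', Real.sq_sqrt (Finset.sum_nonneg fun i _ => sq_nonneg _)]
  simp [dotProduct, sq]

lemma enorm_le_iff {K : ℝ} (hK : 0 ≤ K) (z : Fin d → ℝ) : enorm' z ≤ K ↔ z ⬝ᵥ z ≤ K ^ 2 := by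
  rw [← enorm_sq_eq]
  constructor
  · intro h
    exact pow_le_pow_left₀ (enorm_nonneg' z) h 2
  · intro h
    have h1 : enorm' z = Real.sqrt (enorm' z ^ 2) := (Real.sqrt_sq (enorm_nonneg' z)).symm
    rw [h1, ← Real.sqrt_sq hK]
    exact Real.sqrt_le_sqrt h

lemma two_dot_le (p q : Fin d → ℝ) : 2 * (p ⬝ᵥ q) - p ⬝ᵥ p ≤ q ⬝ᵥ q := by
  have h := dot_self_nonneg' (q - p)
  simp only [dotProduct_sub, sub_dotProduct] at h
  rw [dotProduct_comm q p] at h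
  linarith

lemma dot_mulmul (σm : Matrix (Fin d) (Fin d) ℝ) (c w : Fin d → ℝ) :
    c ⬝ᵥ ((σm * σmᵀ) *ᵥ w) = (σmᵀ *ᵥ c) ⬝ᵥ (σmᵀ *ᵥ w) := by
  rw [← mulVec_mulVec, dotProduct_mulVec, mulVec_transpose, mulVec_transpose]

lemma SigmaMat_mul_transpose (σm : Matrix (Fin d) (Fin d) ℝ) (z θ : Fin d → ℝ) :
    SigmaMat σm z θ * (SigmaMat σm z θ)ᵀ =
      fromBlocks (σm * σmᵀ) (replicateCol Unit (σm *ᵥ z)) (replicateRow Unit (σm *ᵥ z))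
        (Matrix.of fun _ _ => z ⬝ᵥ z + θ ⬝ᵥ θ) := by
  have h1 : σm * replicateCol Unit z = replicateCol Unit (σm *ᵥ z) := (replicateCol_mulVec _ _).symm
  have h2 : replicateRow Unit z * σmᵀ = replicateRow Unit (σm *ᵥ z) := by
    ext i j
    simp [mul_apply, mulVec, dotProduct, mul_comm]
  have h3 : replicateRow Unit z * replicateCol Unit z + replicateRow Unit θ * replicateCol Unit θ
      = (Matrix.of fun _ _ => z ⬝ᵥ z + θ ⬝ᵥ θ : Matrix Unit Unit ℝ) := by
    ext i j
    simp [replicateRow_mul_replicateCol]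
  rw [SigmaMat, fromBlocks_transpose, fromBlocks_multiply]
  simp only [transpose_replicateRow, transpose_zero, Matrix.mul_zero, Matrix.zero_mul, add_zero, zero_add]
  rw [h1, h2, h3]

lemma enorm_sub_le_sqrt_dist (z z' : Fin d → ℝ) :
    enorm' (z - z') ≤ Real.sqrt d * dist z z' := by
  rw [enorm', ← Real.sqrt_sq dist_nonneg, ← Real.sqrt_mul (Nat.cast_nonneg d)]
  apply Real.sqrt_le_sqrt
  calc ∑ i, (z - z') i ^ 2 ≤ ∑ _i : Fin d, dist z z' ^ 2 := by
        apply Finset.sum_le_sum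
        intro i _
        have h1 : |(z - z') i| ≤ dist z z' := by
          have := dist_le_pi_dist z z' i
          rwa [Real.dist_eq] at this
        calc (z - z') i ^ 2 = |(z - z') i| ^ 2 := (sq_abs _).symm
          _ ≤ dist z z' ^ 2 := pow_le_pow_left₀ (abs_nonneg _) h1 2
    _ = d * dist z z' ^ 2 := by simp [Finset.sum_const, nsmul_eq_mul]

end aux

theorem stmt12 {d : ℕ} (hd : 1 ≤ d) {U : Type*} [MetricSpace U] [CompactSpace U]
    (σ : (Fin d → ℝ) → U → Matrix (Fin d) (Fin d) ℝ)
    (b : (Fin d → ℝ) → U → Fin d → ℝ)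
    (f : (Fin d → ℝ) → ℝ → (Fin d → ℝ) → U → ℝ)
    (M L K : ℝ) (hK : 0 < K)
    (hσM : ∀ x v i j, |σ x v i j| ≤ M)
    (hbM : ∀ x v i, |b x v i| ≤ M)
    (hfM : ∀ x y z v, |f x y z v| ≤ M)
    (hσlip : ∀ x x' v, (∀ i j, |σ x v i j - σ x' v i j| ≤ L * enorm' (x - x')))
    (hblip : ∀ x x' v, enorm' (b x v - b x' v) ≤ L * enorm' (x - x'))
    (hflip : ∀ x x' y y' z z' v,
      |f x y z v - f x' y' z' v| ≤ L * (enorm' (x - x') + |y - y'| + enorm' (z - z')))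
    (hσc : ∀ x, Continuous fun v => σ x v)
    (hbc : ∀ x, Continuous fun v => b x v)
    (hfc : ∀ x y z, Continuous fun v => f x y z v)
    (H1 : ∀ (x : Fin d → ℝ) (y : ℝ),
      Convex ℝ {q : Matrix (Fin d) (Fin d) ℝ × (Fin d → ℝ) × (Fin d → ℝ) × ℝ |
        ∃ (v : U) (w : Fin d → ℝ), enorm' ((σ x v)ᵀ *ᵥ w) ≤ K ∧
          q = (σ x v * (σ x v)ᵀ, (σ x v * (σ x v)ᵀ) *ᵥ w, b x v, f x y ((σ x v)ᵀ *ᵥ w) v)}) :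
    ∀ (x : Fin d → ℝ) (y : ℝ),
      ∃ A : Set ((Fin d → ℝ) × (Fin d → ℝ) × U), IsCompact A ∧
        {p : (Fin d → ℝ) × (Fin d → ℝ) × U | ∃ (v : U) (w : Fin d → ℝ),
            enorm' ((σ x v)ᵀ *ᵥ w) ≤ K ∧ p = ((σ x v)ᵀ *ᵥ w, 0, v)} ⊆ A ∧
        Convex ℝ {q : Matrix (Fin d ⊕ Unit) (Fin d ⊕ Unit) ℝ × ((Fin d → ℝ) × ℝ) |
          ∃ p ∈ A, q = (SigmaMat (σ x p.2.2) p.1 p.2.1 * (SigmaMat (σ x p.2.2) p.1 p.2.1)ᵀ,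
            (b x p.2.2, -f x y p.1 p.2.2))} := by
  intro x y
  classical
  set P := (Fin d → ℝ) × (Fin d → ℝ) × U with hP
  let Φ : P → Matrix (Fin d ⊕ Unit) (Fin d ⊕ Unit) ℝ × ((Fin d → ℝ) × ℝ) :=
    fun p => (SigmaMat (σ x p.2.2) p.1 p.2.1 * (SigmaMat (σ x p.2.2) p.1 p.2.1)ᵀ,
      (b x p.2.2, -f x y p.1 p.2.2))
  let Sset : Set (Matrix (Fin d) (Fin d) ℝ × (Fin d → ℝ) × (Fin d → ℝ) × ℝ) :=
    {q | ∃ (v : U) (w : Fin d → ℝ), enorm' ((σ x v)ᵀ *ᵥ w) ≤ K ∧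
      q = (σ x v * (σ x v)ᵀ, (σ x v * (σ x v)ᵀ) *ᵥ w, b x v, f x y ((σ x v)ᵀ *ᵥ w) v)}
  let T : Set (Matrix (Fin d ⊕ Unit) (Fin d ⊕ Unit) ℝ × ((Fin d → ℝ) × ℝ)) :=
    {q | ∃ a u bv fv s, (a, u, bv, fv) ∈ Sset ∧
      (∀ c : Fin d → ℝ, 2 * (c ⬝ᵥ u) - c ⬝ᵥ (a *ᵥ c) ≤ s) ∧ s ≤ K ^ 2 ∧
      q = (fromBlocks a (replicateCol Unit u) (replicateRow Unit u) (Matrix.of fun _ _ => s), (bv, -fv))}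
  let D : Set P := {p | p.1 ⬝ᵥ p.1 + p.2.1 ⬝ᵥ p.2.1 ≤ K ^ 2}
  -- continuity of Φ
  have hσcont : Continuous fun p : P => σ x p.2.2 :=
    (hσc x).comp (continuous_snd.comp continuous_snd)
  have hSig : Continuous fun p : P => SigmaMat (σ x p.2.2) p.1 p.2.1 := by
    apply continuous_matrix
    rintro (i | i) (j | j)
    · exact (continuous_apply j).comp ((continuous_apply i).comp hσcont)
    · exact continuous_const
    · exact (continuous_apply j).comp continuous_fst
    · exact (continuous_apply j).comp (continuous_fst.comp continuous_snd)
  have hfcont : Continuous fun p : (Fin d → ℝ) × U => f x y p.1 p.2 := by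
    rw [continuous_iff_continuousAt]
    rintro ⟨z₀, v₀⟩
    rw [Metric.continuousAt_iff]
    intro ε hε
    set Cst : ℝ := |L| * Real.sqrt d + 1 with hCst
    have hCpos : 0 < Cst := by positivity
    obtain ⟨δ₁, hδ₁, h1⟩ := Metric.continuousAt_iff.mp (hfc x y z₀).continuousAt (ε / 2)
      (by linarith)
    refine ⟨min δ₁ (ε / (2 * Cst)), by positivity, ?_⟩
    rintro ⟨z, v⟩ hzv
    rw [Prod.dist_eq] at hzv
    have hdz : dist z z₀ < ε / (2 * Cst) :=
      lt_of_le_of_lt (le_max_left _ _) (lt_min_iff.mp hzv).2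
    have hdv : dist v v₀ < δ₁ :=
      lt_of_le_of_lt (le_max_right _ _) (lt_min_iff.mp hzv).1
    have hfz : |f x y z v - f x y z₀ v| ≤ Cst * dist z z₀ := by
      have h2 := hflip x x y y z z₀ v
      simp only [sub_self] at h2
      have he0 : enorm' ((0 : Fin d → ℝ)) = 0 := by simp [enorm']
      have h3 : |f x y z v - f x y z₀ v| ≤ L * enorm' (z - z₀) := by
        simpa [he0] using h2
      calc |f x y z v - f x y z₀ v| ≤ L * enorm' (z - z₀) := h3
        _ ≤ |L| * enorm' (z - z₀) :=
            mul_le_mul_of_nonneg_right (le_abs_self L) (enorm_nonneg' _)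
        _ ≤ |L| * (Real.sqrt d * dist z z₀) :=
            mul_le_mul_of_nonneg_left (enorm_sub_le_sqrt_dist z z₀) (abs_nonneg L)
        _ = |L| * Real.sqrt d * dist z z₀ := by ring
        _ ≤ Cst * dist z z₀ := by
            apply mul_le_mul_of_nonneg_right _ dist_nonneg
            rw [hCst]; linarith
    have hfv : dist (f x y z₀ v) (f x y z₀ v₀) < ε / 2 := h1 hdv
    rw [Real.dist_eq] at hfv ⊢
    have : Cst * dist z z₀ < ε / 2 := by
      calc Cst * dist z z₀ < Cst * (ε / (2 * Cst)) :=
            mul_lt_mul_of_pos_left hdz hCpos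
        _ = ε / 2 := by field_simp
    calc |f x y z v - f x y z₀ v₀|
        ≤ |f x y z v - f x y z₀ v| + |f x y z₀ v - f x y z₀ v₀| := abs_sub_le _ _ _
      _ < ε / 2 + ε / 2 := by
          apply add_lt_add_of_le_of_lt _ hfv
          · exact le_of_lt (lt_of_le_of_lt hfz this)
      _ = ε := by ring
  have hΦc : Continuous Φ := by
    apply Continuous.prodMk
    · exact hSig.matrix_mul hSig.matrix_transpose
    · apply Continuous.prodMk
      · exact (hbc x).comp (continuous_snd.comp continuous_snd)
      · exact (hfcont.comp (continuous_fst.prodMk (continuous_snd.comp continuous_snd))).neg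
  have hdotc : Continuous fun p : P => p.1 ⬝ᵥ p.1 + p.2.1 ⬝ᵥ p.2.1 := by
    apply Continuous.add
    · exact continuous_finset_sum _ fun i _ =>
        ((continuous_apply i).comp continuous_fst).mul ((continuous_apply i).comp continuous_fst)
    · exact continuous_finset_sum _ fun i _ =>
        ((continuous_apply i).comp (continuous_fst.comp continuous_snd)).mul
          ((continuous_apply i).comp (continuous_fst.comp continuous_snd))
  have hDclosed : IsClosed D := isClosed_le hdotc continuous_const
  have hdotKnorm : ∀ z : Fin d → ℝ, z ⬝ᵥ z ≤ K ^ 2 → z ∈ Metric.closedBall (0 : Fin d → ℝ) K := by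
    intro z hz
    rw [Metric.mem_closedBall, dist_zero_right, pi_norm_le_iff_of_nonneg hK.le]
    intro i
    have h1 : z i * z i ≤ z ⬝ᵥ z := Finset.single_le_sum (f := fun j => z j * z j)
      (fun j _ => mul_self_nonneg _) (Finset.mem_univ i)
    have h2 : |z i| ^ 2 ≤ K ^ 2 := by rw [sq_abs]; nlinarith [h1, hz]
    calc ‖z i‖ = Real.sqrt (|z i| ^ 2) := by
          rw [Real.sqrt_sq (abs_nonneg _)]; rfl
      _ ≤ Real.sqrt (K ^ 2) := Real.sqrt_le_sqrt h2
      _ = K := Real.sqrt_sq hK.le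
  have hDcomp : IsCompact D := by
    apply IsCompact.of_isClosed_subset
      (((isCompact_closedBall (0 : Fin d → ℝ) K).prod
        ((isCompact_closedBall (0 : Fin d → ℝ) K).prod isCompact_univ))) hDclosed
    rintro ⟨z, θ, v⟩ hp
    have h1 : z ⬝ᵥ z ≤ K ^ 2 := le_trans (le_add_of_nonneg_right (dot_self_nonneg' θ)) hp
    have h2 : θ ⬝ᵥ θ ≤ K ^ 2 := le_trans (le_add_of_nonneg_left (dot_self_nonneg' z)) hp
    exact ⟨hdotKnorm z h1, hdotKnorm θ h2, Set.mem_univ v⟩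
  have hTconv : Convex ℝ T := by
    rintro q₁ ⟨a₁, u₁, b₁, f₁, s₁, hS₁, hin₁, hsK₁, rfl⟩
      q₂ ⟨a₂, u₂, b₂, f₂, s₂, hS₂, hin₂, hsK₂, rfl⟩ lam mu hlam hmu hlm
    refine ⟨lam • a₁ + mu • a₂, lam • u₁ + mu • u₂, lam • b₁ + mu • b₂,
      lam * f₁ + mu * f₂, lam * s₁ + mu * s₂, ?_, ?_, ?_, ?_⟩
    · have hmem := H1 x y hS₁ hS₂ hlam hmu hlm
      simp only [Prod.smul_mk, Prod.mk_add_mk, smul_eq_mul] at hmem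
      exact hmem
    · intro c
      have e1 : c ⬝ᵥ (lam • u₁ + mu • u₂) = lam * (c ⬝ᵥ u₁) + mu * (c ⬝ᵥ u₂) := by
        simp [dotProduct_add, dotProduct_smul, smul_eq_mul]
      have e2 : c ⬝ᵥ ((lam • a₁ + mu • a₂) *ᵥ c)
          = lam * (c ⬝ᵥ (a₁ *ᵥ c)) + mu * (c ⬝ᵥ (a₂ *ᵥ c)) := by
        rw [add_mulVec]
        simp [dotProduct_add, smul_mulVec, dotProduct_smul, smul_eq_mul]
      rw [e1, e2]
      have i1 := mul_le_mul_of_nonneg_left (hin₁ c) hlam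
      have i2 := mul_le_mul_of_nonneg_left (hin₂ c) hmu
      nlinarith [i1, i2]
    · nlinarith [mul_le_mul_of_nonneg_left hsK₁ hlam, mul_le_mul_of_nonneg_left hsK₂ hmu]
    · have m1 : lam • fromBlocks a₁ (replicateCol Unit u₁) (replicateRow Unit u₁) (Matrix.of fun _ _ => s₁)
          + mu • fromBlocks a₂ (replicateCol Unit u₂) (replicateRow Unit u₂) (Matrix.of fun _ _ => s₂)
          = fromBlocks (lam • a₁ + mu • a₂) (replicateCol Unit (lam • u₁ + mu • u₂))
              (replicateRow Unit (lam • u₁ + mu • u₂)) (Matrix.of fun _ _ => lam * s₁ + mu * s₂) := by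
        have hof : (lam • (Matrix.of fun _ _ => s₁) + mu • (Matrix.of fun _ _ => s₂) :
            Matrix Unit Unit ℝ) = Matrix.of fun _ _ => lam * s₁ + mu * s₂ := by
          ext i j
          simp [smul_eq_mul]
        rw [fromBlocks_smul, fromBlocks_smul, fromBlocks_add, replicateCol_add, replicateCol_smul, replicateCol_smul,
          replicateRow_add, replicateRow_smul, replicateRow_smul, hof]
      have hf2 : lam • (-f₁) + mu • (-f₂) = -(lam * f₁ + mu * f₂) := by
        simp only [smul_eq_mul]
        ring
      simp only [Prod.smul_mk, Prod.mk_add_mk, m1, hf2]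
  have hBT : ∀ (v : U) (w : Fin d → ℝ), enorm' ((σ x v)ᵀ *ᵥ w) ≤ K →
      Φ ((σ x v)ᵀ *ᵥ w, 0, v) ∈ T := by
    intro v w hw
    refine ⟨σ x v * (σ x v)ᵀ, (σ x v * (σ x v)ᵀ) *ᵥ w, b x v, f x y ((σ x v)ᵀ *ᵥ w) v,
      ((σ x v)ᵀ *ᵥ w) ⬝ᵥ ((σ x v)ᵀ *ᵥ w), ⟨v, w, hw, rfl⟩, ?_, ?_, ?_⟩
    · intro c
      rw [dot_mulmul, dot_mulmul]
      exact two_dot_le ((σ x v)ᵀ *ᵥ c) ((σ x v)ᵀ *ᵥ w)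
    · exact (enorm_le_iff hK.le _).mp hw
    · show (SigmaMat (σ x v) ((σ x v)ᵀ *ᵥ w) 0 * (SigmaMat (σ x v) ((σ x v)ᵀ *ᵥ w) 0)ᵀ,
        (b x v, -f x y ((σ x v)ᵀ *ᵥ w) v)) = _
      rw [SigmaMat_mul_transpose]
      have hu : σ x v *ᵥ ((σ x v)ᵀ *ᵥ w) = (σ x v * (σ x v)ᵀ) *ᵥ w := mulVec_mulVec w _ _
      simp [hu]
  have hTD : T ⊆ Φ '' D := by
    rintro q ⟨a, u, bv, fv, s, ⟨v, w, hw, heq⟩, hin, hsK, rfl⟩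
    simp only [Prod.mk.injEq] at heq
    obtain ⟨rfl, rfl, rfl, rfl⟩ := heq
    have hzz_le : ((σ x v)ᵀ *ᵥ w) ⬝ᵥ ((σ x v)ᵀ *ᵥ w) ≤ s := by
      have h := hin w
      rw [dot_mulmul] at h
      linarith
    set z := (σ x v)ᵀ *ᵥ w with hz
    set θ : Fin d → ℝ := fun i => if i = ⟨0, hd⟩ then Real.sqrt (s - z ⬝ᵥ z) else 0 with hθ
    have hθθ : θ ⬝ᵥ θ = s - z ⬝ᵥ z := by
      rw [dotProduct, Finset.sum_eq_single (⟨0, hd⟩ : Fin d)]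
      · rw [hθ]
        simp only [if_pos rfl]
        exact Real.mul_self_sqrt (by linarith)
      · intro i _ hi
        rw [hθ]
        simp only [if_neg hi, mul_zero]
      · intro h
        exact absurd (Finset.mem_univ _) h
    refine ⟨(z, θ, v), ?_, ?_⟩
    · show z ⬝ᵥ z + θ ⬝ᵥ θ ≤ K ^ 2
      rw [hθθ]
      linarith
    · show (SigmaMat (σ x v) z θ * (SigmaMat (σ x v) z θ)ᵀ, (b x v, -f x y z v)) = _
      rw [SigmaMat_mul_transpose]
      have hu : σ x v *ᵥ z = (σ x v * (σ x v)ᵀ) *ᵥ w := mulVec_mulVec w _ _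
      have hs : z ⬝ᵥ z + θ ⬝ᵥ θ = s := by rw [hθθ]; ring
      rw [hu, hs]
  have hΦD : IsCompact (Φ '' D) := hDcomp.image hΦc
  have hCD : closure T ⊆ Φ '' D := closure_minimal hTD hΦD.isClosed
  refine ⟨D ∩ Φ ⁻¹' closure T, hDcomp.inter_right (isClosed_closure.preimage hΦc), ?_, ?_⟩
  · rintro p ⟨v, w, hw, rfl⟩
    refine ⟨?_, ?_⟩
    · show ((σ x v)ᵀ *ᵥ w) ⬝ᵥ ((σ x v)ᵀ *ᵥ w) + (0 : Fin d → ℝ) ⬝ᵥ (0 : Fin d → ℝ) ≤ K ^ 2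
      rw [zero_dotProduct, add_zero]
      exact (enorm_le_iff hK.le _).mp hw
    · exact subset_closure (hBT v w hw)
  · have hset : {q | ∃ p ∈ D ∩ Φ ⁻¹' closure T, q = Φ p} = closure T := by
      apply Set.Subset.antisymm
      · rintro q ⟨p, hp, rfl⟩
        exact hp.2
      · intro q hq
        obtain ⟨p, hpD, hpq⟩ := hCD hq
        exact ⟨p, ⟨hpD, by simp only [Set.mem_preimage, hpq]; exact hq⟩, hpq.symm⟩
    show Convex ℝ {q | ∃ p ∈ D ∩ Φ ⁻¹' closure T, q = Φ p}
    rw [hset]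
    exact hTconv.closure
end

section
/- Suppose f does not depend on z (f(x,y,z,v) = f(x,y,v)) and that for every (x,y) the set {((σσ^*)(x,v), b(x,v), f(x,y,v)) : v ∈ U} is convex (assumption (H2)). Then assumption (H) holds: for every (x,y) there exists a compact set A ⊆ ℝ^d × ℝ^d × U containing {(σ^*(x,v)w, 0, v) : v ∈ U, |σ^*(x,v)w| ≤ K} such that {((ΣΣ^*)(x,y,z,θ,v), β(x,y,z,θ,v)) : (z,θ,v) ∈ A} is convex. -/
open Matrix

/-- Euclidean norm of a vector in `Fin d → ℝ`. -/
noncomputable def eucNorm {d : ℕ} (z : Fin d → ℝ) : ℝ := Real.sqrt (∑ i, z i ^ 2)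

section Aux

variable {d : ℕ}

lemma dp_nonneg (a : Fin d → ℝ) : 0 ≤ a ⬝ᵥ a :=
  Finset.sum_nonneg fun _ _ => mul_self_nonneg _

lemma dp_adj (σ : Matrix (Fin d) (Fin d) ℝ) (v w : Fin d → ℝ) :
    (σᵀ *ᵥ v) ⬝ᵥ w = v ⬝ᵥ (σ *ᵥ w) := by
  rw [mulVec_transpose, ← dotProduct_mulVec]

lemma dp_sq (σ : Matrix (Fin d) (Fin d) ℝ) (w : Fin d → ℝ) :
    w ⬝ᵥ ((σ * σᵀ) *ᵥ w) = (σᵀ *ᵥ w) ⬝ᵥ (σᵀ *ᵥ w) := by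
  rw [← mulVec_mulVec, dp_adj, dotProduct_comm]

lemma quad_nonneg (σ : Matrix (Fin d) (Fin d) ℝ) (z θ w : Fin d → ℝ) (t : ℝ) :
    0 ≤ (z ⬝ᵥ z + θ ⬝ᵥ θ) * (t * t) + (2 * ((σ *ᵥ z) ⬝ᵥ w)) * t
      + w ⬝ᵥ ((σ * σᵀ) *ᵥ w) := by
  have e2 : (σ *ᵥ z) ⬝ᵥ w = (σᵀ *ᵥ w) ⬝ᵥ z := by
    rw [dotProduct_comm, ← dp_adj, dotProduct_comm]
  have key : (z ⬝ᵥ z + θ ⬝ᵥ θ) * (t * t) + (2 * ((σ *ᵥ z) ⬝ᵥ w)) * t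
      + w ⬝ᵥ ((σ * σᵀ) *ᵥ w)
      = ((σᵀ *ᵥ w) + t • z) ⬝ᵥ ((σᵀ *ᵥ w) + t • z) + (t * t) * (θ ⬝ᵥ θ) := by
    rw [dp_sq, e2]
    simp [dotProduct_add, add_dotProduct, dotProduct_smul, smul_dotProduct,
      smul_eq_mul, dotProduct_comm z (σᵀ *ᵥ w)]
    ring
  rw [key]
  have := dp_nonneg ((σᵀ *ᵥ w) + t • z)
  have := dp_nonneg θ
  nlinarith

lemma s11 (σm : Matrix (Fin d) (Fin d) ℝ) (z θ : Fin d → ℝ) (i j : Fin d) :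
    (SigmaMat σm z θ * (SigmaMat σm z θ)ᵀ) (Sum.inl i) (Sum.inl j) = (σm * σmᵀ) i j := by
  simp [SigmaMat, Matrix.mul_apply, Fintype.sum_sum_type]

lemma s12 (σm : Matrix (Fin d) (Fin d) ℝ) (z θ : Fin d → ℝ) (i : Fin d) (u : Unit) :
    (SigmaMat σm z θ * (SigmaMat σm z θ)ᵀ) (Sum.inl i) (Sum.inr u) = (σm *ᵥ z) i := by
  simp [SigmaMat, Matrix.mul_apply, Fintype.sum_sum_type, mulVec, dotProduct]

lemma s21 (σm : Matrix (Fin d) (Fin d) ℝ) (z θ : Fin d → ℝ) (u : Unit) (j : Fin d) :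
    (SigmaMat σm z θ * (SigmaMat σm z θ)ᵀ) (Sum.inr u) (Sum.inl j) = (σm *ᵥ z) j := by
  simp [SigmaMat, Matrix.mul_apply, Fintype.sum_sum_type, mulVec, dotProduct, mul_comm]

lemma s22 (σm : Matrix (Fin d) (Fin d) ℝ) (z θ : Fin d → ℝ) (u u' : Unit) :
    (SigmaMat σm z θ * (SigmaMat σm z θ)ᵀ) (Sum.inr u) (Sum.inr u') = z ⬝ᵥ z + θ ⬝ᵥ θ := by
  simp [SigmaMat, Matrix.mul_apply, Fintype.sum_sum_type, dotProduct]

/-- Key extraction lemma: if the "matrix fractional" inequality holds, there is a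
preimage of `u` under `σ` of squared norm at most `s`. -/
lemma extract (σ : Matrix (Fin d) (Fin d) ℝ) (u : Fin d → ℝ) (s : ℝ) (hs : 0 ≤ s)
    (h : ∀ w : Fin d → ℝ, (u ⬝ᵥ w)^2 ≤ s * ((σᵀ *ᵥ w) ⬝ᵥ (σᵀ *ᵥ w))) :
    ∃ z : Fin d → ℝ, σ *ᵥ z = u ∧ z ⬝ᵥ z ≤ s := by
  classical
  set E := EuclideanSpace ℝ (Fin d)
  let e : E ≃ₗ[ℝ] (Fin d → ℝ) := WithLp.linearEquiv 2 ℝ _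
  have hinner : ∀ a b : E, (inner ℝ a b : ℝ) = (e a) ⬝ᵥ (e b) := fun a b => by
    show @inner ℝ (EuclideanSpace ℝ (Fin d)) _ a b = _
    rw [PiLp.inner_apply]
    simp [e, dotProduct, mul_comm]
    rfl
  have hadj : ∀ (v w : Fin d → ℝ), (σᵀ *ᵥ v) ⬝ᵥ w = v ⬝ᵥ (σ *ᵥ w) := fun v w =>
    dp_adj σ v w
  let T : E →ₗ[ℝ] E := e.symm.toLinearMap ∘ₗ σ.mulVecLin ∘ₗ e.toLinearMap
  let T' : E →ₗ[ℝ] E := e.symm.toLinearMap ∘ₗ σᵀ.mulVecLin ∘ₗ e.toLinearMap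
  have hT : ∀ a : E, e (T a) = σ *ᵥ (e a) := fun a => rfl
  have hT' : ∀ a : E, e (T' a) = σᵀ *ᵥ (e a) := fun a => rfl
  set V : Submodule ℝ E := LinearMap.range T with hV
  set W : Submodule ℝ E := LinearMap.range T' with hW
  have huV : e.symm u ∈ V := by
    rw [← Submodule.orthogonal_orthogonal V]
    intro w hw
    have hw' : ∀ v : E, v ∈ V → (inner ℝ v w : ℝ) = 0 := fun v hv => hw v hv
    have hσw : σᵀ *ᵥ (e w) = 0 := by
      have h1 : (inner ℝ (T (e.symm (σᵀ *ᵥ (e w)))) w : ℝ) = 0 :=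
        hw' _ (LinearMap.mem_range_self T _)
      rw [hinner] at h1
      have h2 : (σᵀ *ᵥ (e w)) ⬝ᵥ (σᵀ *ᵥ (e w)) = 0 := by
        have : e (T (e.symm (σᵀ *ᵥ (e w)))) = σ *ᵥ (σᵀ *ᵥ (e w)) := by
          rw [hT]; simp
        rw [this] at h1
        rw [hadj, dotProduct_comm, h1]
      exact dotProduct_self_eq_zero.mp h2
    have h3 : (u ⬝ᵥ (e w))^2 ≤ 0 := by
      have := h (e w); rw [hσw] at this; simpa using this
    have h4 : u ⬝ᵥ (e w) = 0 := by nlinarith [sq_nonneg (u ⬝ᵥ (e w))]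
    rw [hinner, show e (e.symm u) = u by simp, dotProduct_comm]
    exact h4
  obtain ⟨z₁, hz₁⟩ := huV
  set z : E := (W.orthogonalProjection z₁ : E) with hz
  have hzW : z ∈ W := (W.orthogonalProjection z₁).2
  have hdiff : z₁ - z ∈ Wᗮ := W.sub_starProjection_mem_orthogonal z₁
  have hker : ∀ w : E, w ∈ Wᗮ → σ *ᵥ (e w) = 0 := by
    intro w hw
    have h1 : (inner ℝ (T' (e.symm (σ *ᵥ (e w)))) w : ℝ) = 0 :=
      hw _ (LinearMap.mem_range_self T' _)
    rw [hinner] at h1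
    have h2 : e (T' (e.symm (σ *ᵥ (e w)))) = σᵀ *ᵥ (σ *ᵥ (e w)) := by rw [hT']; simp
    rw [h2, hadj] at h1
    exact dotProduct_self_eq_zero.mp h1
  have hTz : σ *ᵥ (e z) = u := by
    have h0 : σ *ᵥ (e (z₁ - z)) = 0 := hker _ hdiff
    have : e (z₁ - z) = e z₁ - e z := by simp
    rw [this, mulVec_sub] at h0
    have h1 : σ *ᵥ (e z₁) = u := by
      have := congrArg e hz₁
      rw [hT] at this
      simpa using this
    have := sub_eq_zero.mp h0
    rw [← this, h1]
  obtain ⟨w₀, hw₀⟩ := hzW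
  have hzz : (e z) ⬝ᵥ (e z) = u ⬝ᵥ (e w₀) := by
    have h1 : e z = σᵀ *ᵥ (e w₀) := by rw [← hw₀, hT']
    calc (e z) ⬝ᵥ (e z) = (σᵀ *ᵥ (e w₀)) ⬝ᵥ (e z) := by rw [h1]
    _ = (e w₀) ⬝ᵥ (σ *ᵥ (e z)) := hadj _ _
    _ = (e w₀) ⬝ᵥ u := by rw [hTz]
    _ = u ⬝ᵥ (e w₀) := dotProduct_comm _ _
  have hineq := h (e w₀)
  have h1 : e z = σᵀ *ᵥ (e w₀) := by rw [← hw₀, hT']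
  rw [← h1, ← hzz] at hineq
  refine ⟨e z, hTz, ?_⟩
  rcases eq_or_lt_of_le (dp_nonneg (e z)) with h0 | h0
  · rw [← h0]; exact hs
  · nlinarith

end Aux

theorem stmt13 {d : ℕ} (hd : 1 ≤ d) {U : Type*} [MetricSpace U] [CompactSpace U]
    (σ : (Fin d → ℝ) → U → Matrix (Fin d) (Fin d) ℝ)
    (b : (Fin d → ℝ) → U → Fin d → ℝ)
    (f : (Fin d → ℝ) → ℝ → U → ℝ)
    (M L K : ℝ) (hK : 0 < K)
    (hσM : ∀ x v i j, |σ x v i j| ≤ M)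
    (hbM : ∀ x v i, |b x v i| ≤ M)
    (hfM : ∀ x y v, |f x y v| ≤ M)
    (hσlip : ∀ x x' v, (∀ i j, |σ x v i j - σ x' v i j| ≤ L * eucNorm (x - x')))
    (hblip : ∀ x x' v, eucNorm (b x v - b x' v) ≤ L * eucNorm (x - x'))
    (hflip : ∀ x x' y y' v, |f x y v - f x' y' v| ≤ L * (eucNorm (x - x') + |y - y'|))
    (hσc : ∀ x, Continuous fun v => σ x v)
    (hbc : ∀ x, Continuous fun v => b x v)
    (hfc : ∀ x y, Continuous fun v => f x y v)
    (H2 : ∀ (x : Fin d → ℝ) (y : ℝ),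
      Convex ℝ {q : Matrix (Fin d) (Fin d) ℝ × (Fin d → ℝ) × ℝ |
        ∃ v : U, q = (σ x v * (σ x v)ᵀ, b x v, f x y v)}) :
    ∀ (x : Fin d → ℝ) (y : ℝ),
      ∃ A : Set ((Fin d → ℝ) × (Fin d → ℝ) × U), IsCompact A ∧
        {p : (Fin d → ℝ) × (Fin d → ℝ) × U | ∃ (v : U) (w : Fin d → ℝ),
            eucNorm ((σ x v)ᵀ *ᵥ w) ≤ K ∧ p = ((σ x v)ᵀ *ᵥ w, 0, v)} ⊆ A ∧
        Convex ℝ {q : Matrix (Fin d ⊕ Unit) (Fin d ⊕ Unit) ℝ × ((Fin d → ℝ) × ℝ) |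
          ∃ p ∈ A, q = (SigmaMat (σ x p.2.2) p.1 p.2.1 * (SigmaMat (σ x p.2.2) p.1 p.2.1)ᵀ,
            (b x p.2.2, -f x y p.2.2))} := by
  intro x y
  refine ⟨{p : (Fin d → ℝ) × (Fin d → ℝ) × U | p.1 ⬝ᵥ p.1 + p.2.1 ⬝ᵥ p.2.1 ≤ K ^ 2},
    ?_, ?_, ?_⟩
  · -- compactness
    apply IsCompact.of_isClosed_subset
      (((isCompact_closedBall (0 : Fin d → ℝ) K).prod
        ((isCompact_closedBall (0 : Fin d → ℝ) K).prod isCompact_univ)))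
    · apply isClosed_le _ continuous_const
      fun_prop [dotProduct]
    · rintro ⟨z, θ, v⟩ h
      simp only [Set.mem_setOf_eq] at h
      have h1 : z ⬝ᵥ z ≤ K ^ 2 := by linarith [dp_nonneg θ]
      have h2 : θ ⬝ᵥ θ ≤ K ^ 2 := by linarith [dp_nonneg z]
      have key : ∀ a : Fin d → ℝ, a ⬝ᵥ a ≤ K ^ 2 →
          a ∈ Metric.closedBall (0 : Fin d → ℝ) K := by
        intro a ha
        rw [mem_closedBall_zero_iff, pi_norm_le_iff_of_nonneg hK.le]
        intro i
        have hi : a i * a i ≤ K ^ 2 := by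
          have hnn : ∀ j ∈ Finset.univ, 0 ≤ a j * a j := fun j _ => mul_self_nonneg _
          calc a i * a i ≤ a ⬝ᵥ a := Finset.single_le_sum hnn (Finset.mem_univ i)
          _ ≤ K ^ 2 := ha
        rw [Real.norm_eq_abs]
        nlinarith [abs_nonneg (a i), abs_mul_abs_self (a i)]
      exact ⟨key z h1, key θ h2, trivial⟩
  · -- contains the required set
    rintro p ⟨v, w, hw, rfl⟩
    simp only [Set.mem_setOf_eq]
    simp only [eucNorm] at hw
    have hnn : 0 ≤ ∑ i, ((σ x v)ᵀ *ᵥ w) i ^ 2 := Finset.sum_nonneg fun _ _ => sq_nonneg _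
    have h0 : ∑ i, ((σ x v)ᵀ *ᵥ w) i ^ 2 ≤ K ^ 2 := by
      nlinarith [Real.sq_sqrt hnn, Real.sqrt_nonneg (∑ i, ((σ x v)ᵀ *ᵥ w) i ^ 2)]
    have hdp : ((σ x v)ᵀ *ᵥ w) ⬝ᵥ ((σ x v)ᵀ *ᵥ w) = ∑ i, ((σ x v)ᵀ *ᵥ w) i ^ 2 := by
      simp [dotProduct, sq]
    have hz : ((0 : Fin d → ℝ) ⬝ᵥ (0 : Fin d → ℝ)) = 0 := by simp
    rw [hdp, hz]
    linarith
  · -- convexity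
    intro q₁ hq₁ q₂ hq₂ a c ha hc hac
    obtain ⟨⟨z₁, θ₁, v₁⟩, hp₁, rfl⟩ := hq₁
    obtain ⟨⟨z₂, θ₂, v₂⟩, hp₂, rfl⟩ := hq₂
    simp only [Set.mem_setOf_eq] at hp₁ hp₂
    have hm₁ : ∃ v' : U, ((σ x v₁ * (σ x v₁)ᵀ, b x v₁, f x y v₁) :
        Matrix (Fin d) (Fin d) ℝ × (Fin d → ℝ) × ℝ)
        = (σ x v' * (σ x v')ᵀ, b x v', f x y v') := ⟨v₁, rfl⟩
    have hm₂ : ∃ v' : U, ((σ x v₂ * (σ x v₂)ᵀ, b x v₂, f x y v₂) :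
        Matrix (Fin d) (Fin d) ℝ × (Fin d → ℝ) × ℝ)
        = (σ x v' * (σ x v')ᵀ, b x v', f x y v') := ⟨v₂, rfl⟩
    have hmem := H2 x y hm₁ hm₂ ha hc hac
    obtain ⟨v, hv⟩ := hmem
    have hσeq : a • (σ x v₁ * (σ x v₁)ᵀ) + c • (σ x v₂ * (σ x v₂)ᵀ)
        = σ x v * (σ x v)ᵀ := by
      have := congrArg Prod.fst hv
      simpa using this
    have hbeq : a • b x v₁ + c • b x v₂ = b x v := by
      have := congrArg (fun q => q.2.1) hv
      simpa using this
    have hfeq : a * f x y v₁ + c * f x y v₂ = f x y v := by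
      have := congrArg (fun q => q.2.2) hv
      simpa using this
    set u : Fin d → ℝ := a • (σ x v₁ *ᵥ z₁) + c • (σ x v₂ *ᵥ z₂) with hu
    set s : ℝ := a * (z₁ ⬝ᵥ z₁ + θ₁ ⬝ᵥ θ₁) + c * (z₂ ⬝ᵥ z₂ + θ₂ ⬝ᵥ θ₂) with hsdef
    have hs : 0 ≤ s :=
      add_nonneg (mul_nonneg ha (add_nonneg (dp_nonneg _) (dp_nonneg _)))
        (mul_nonneg hc (add_nonneg (dp_nonneg _) (dp_nonneg _)))
    have hq : ∀ w : Fin d → ℝ,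
        (u ⬝ᵥ w) ^ 2 ≤ s * (((σ x v)ᵀ *ᵥ w) ⬝ᵥ ((σ x v)ᵀ *ᵥ w)) := by
      intro w
      have hd0 : ∀ t : ℝ,
          0 ≤ s * (t * t) + (2 * (u ⬝ᵥ w)) * t + w ⬝ᵥ ((σ x v * (σ x v)ᵀ) *ᵥ w) := by
        intro t
        have e1 := quad_nonneg (σ x v₁) z₁ θ₁ w t
        have e2 := quad_nonneg (σ x v₂) z₂ θ₂ w t
        have k1 : w ⬝ᵥ ((σ x v * (σ x v)ᵀ) *ᵥ w)
            = a * (w ⬝ᵥ ((σ x v₁ * (σ x v₁)ᵀ) *ᵥ w))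
              + c * (w ⬝ᵥ ((σ x v₂ * (σ x v₂)ᵀ) *ᵥ w)) := by
          rw [← hσeq]
          simp [add_mulVec, smul_mulVec, dotProduct_add, dotProduct_smul,
            smul_eq_mul]
        have k2 : u ⬝ᵥ w = a * ((σ x v₁ *ᵥ z₁) ⬝ᵥ w) + c * ((σ x v₂ *ᵥ z₂) ⬝ᵥ w) := by
          simp [hu, add_dotProduct, smul_dotProduct, smul_eq_mul]
        rw [k1, k2, hsdef]
        nlinarith [mul_nonneg ha e1, mul_nonneg hc e2]
      have hdisc := discrim_le_zero hd0
      rw [discrim] at hdisc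
      have hsq := dp_sq (σ x v) w
      nlinarith [hdisc]
    obtain ⟨z, hz, hzs⟩ := extract (σ x v) u s hs hq
    have hsz : 0 ≤ s - z ⬝ᵥ z := by linarith
    set θ : Fin d → ℝ := fun i => if i = (⟨0, hd⟩ : Fin d) then Real.sqrt (s - z ⬝ᵥ z)
      else 0 with hθdef
    have hθ : θ ⬝ᵥ θ = s - z ⬝ᵥ z := by
      rw [dotProduct]
      have hz0 : ∀ i ∈ Finset.univ, i ≠ (⟨0, hd⟩ : Fin d) → θ i * θ i = 0 := by
        intro i _ hi; simp [hθdef, hi]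
      rw [Finset.sum_eq_single_of_mem _ (Finset.mem_univ (⟨0, hd⟩ : Fin d)) hz0]
      simp [hθdef, Real.mul_self_sqrt hsz]
    have hmemA : ((z, θ, v) : (Fin d → ℝ) × (Fin d → ℝ) × U) ∈
        {p : (Fin d → ℝ) × (Fin d → ℝ) × U | p.1 ⬝ᵥ p.1 + p.2.1 ⬝ᵥ p.2.1 ≤ K ^ 2} := by
      simp only [Set.mem_setOf_eq]
      have : z ⬝ᵥ z + θ ⬝ᵥ θ = s := by rw [hθ]; ring
      rw [this, hsdef]
      nlinarith [mul_le_mul_of_nonneg_left hp₁ ha, mul_le_mul_of_nonneg_left hp₂ hc]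
    refine ⟨(z, θ, v), hmemA, ?_⟩
    have hM : a • (SigmaMat (σ x v₁) z₁ θ₁ * (SigmaMat (σ x v₁) z₁ θ₁)ᵀ)
        + c • (SigmaMat (σ x v₂) z₂ θ₂ * (SigmaMat (σ x v₂) z₂ θ₂)ᵀ)
        = SigmaMat (σ x v) z θ * (SigmaMat (σ x v) z θ)ᵀ := by
      ext i j
      rcases i with i | i <;> rcases j with j | j <;>
        simp only [Matrix.add_apply, Matrix.smul_apply, smul_eq_mul]
      · rw [s11, s11, s11]
        have := congrFun (congrFun hσeq i) j
        simpa using this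
      · rw [s12, s12, s12, hz]
        simp [hu]
      · rw [s21, s21, s21, hz]
        simp [hu]
      · rw [s22, s22, s22, hθ]
        rw [hsdef]; ring
    dsimp only
    simp only [Prod.smul_mk, Prod.mk_add_mk, Prod.mk.injEq]
    refine ⟨hM, hbeq, ?_⟩
    simp only [smul_eq_mul]
    rw [← hfeq]; ring
end
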